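/- Define ψ_{r,k} on r-tuples of positive integers as the multiplicative function whose values on prime-power tuples are: ψ_{r,k}(p^{ν_1},...,p^{ν_r}) = 1 if all ν_i = 0; equal to (-1)^{j-k+1} C(j-1,k-1) if all ν_i ∈ {0,1} and j := ν_1+...+ν_r ≥ k; and 0 otherwise. Then for all positive integers n_1,...,n_r, ϱ_{r,k}(n_1,...,n_r) = ∑_{d_1 | n_1, ..., d_r | n_r} ψ_{r,k}(d_1,...,d_r). -/

import Mathlib

open Finset

private def Faux (k j : ℕ) : ℤ :=
  if j = 0 then 1 else if k ≤ j then (-1) ^ (j - k + 1) * ((j - 1).choose (k - 1) : ℤ) else 0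
lemma L0aux (N s : ℕ) :
    ∑ m ∈ range (N + 1), (-1 : ℤ) ^ m * (N.choose m) * (m.choose s) =
      (-1) ^ s * (if N = s then 1 else 0) := by
  by_cases hs : s ≤ N
  · have hsplit : ∑ m ∈ range (N + 1), ((-1 : ℤ) ^ m * (N.choose m) * (m.choose s)) =
        ∑ m ∈ Ico s (N + 1), ((-1 : ℤ) ^ m * (N.choose m) * (m.choose s)) := by
      rw [range_eq_Ico, ← Finset.sum_Ico_consecutive _ (Nat.zero_le s) (by omega)]
      have h0 : ∑ m ∈ Ico 0 s, ((-1 : ℤ) ^ m * (N.choose m) * (m.choose s)) = 0 := by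
        apply Finset.sum_eq_zero
        intro m hm
        rw [mem_Ico] at hm
        rw [Nat.choose_eq_zero_of_lt (by omega : m < s)]
        push_cast; ring
      rw [h0, zero_add]
    rw [hsplit, Finset.sum_Ico_eq_sum_range]
    have hN : N + 1 - s = (N - s) + 1 := by omega
    rw [hN]
    have key : ∀ i ∈ range (N - s + 1), ((-1 : ℤ) ^ (s + i) * (N.choose (s + i)) * ((s + i).choose s))
        = ((-1) ^ s * (N.choose s : ℤ)) * ((-1) ^ i * ((N - s).choose i)) := by
      intro i hi
      rw [mem_range] at hi
      have h1 : N.choose (s + i) * (s + i).choose s = N.choose s * (N - s).choose i := by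
        have := Nat.choose_mul (n := N) (k := s + i) (s := s) (by omega)
        simpa using this
      have h2 : (N.choose (s+i) : ℤ) * ((s+i).choose s) = (N.choose s : ℤ) * ((N-s).choose i) := by
        exact_mod_cast congrArg Nat.cast h1
      rw [pow_add]
      linear_combination ((-1:ℤ)^s * (-1)^i) * h2
    rw [sum_congr rfl key, ← mul_sum, Int.alternating_sum_range_choose]
    by_cases hNs : N = s
    · simp [hNs]
    · have : N - s ≠ 0 := by omega
      simp [hNs, this]
  · have : ∀ m ∈ range (N + 1), ((-1 : ℤ) ^ m * (N.choose m) * (m.choose s)) = 0 := by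
      intro m hm
      rw [mem_range] at hm
      rw [Nat.choose_eq_zero_of_lt (by omega : m < s)]
      push_cast; ring
    rw [sum_congr rfl this]
    simp
    omega
lemma Fsum_lt (k t : ℕ) (h : t < k) :
    ∑ j ∈ range (t + 1), (t.choose j : ℤ) * Faux k j = 1 := by
  rw [Finset.sum_eq_single 0]
  · simp [Faux]
  · intro j hj hj0
    rw [mem_range] at hj
    have : Faux k j = 0 := by
      unfold Faux
      rw [if_neg hj0, if_neg (by omega)]
    rw [this, mul_zero]
  · simp

lemma Fsum_ge (k : ℕ) (hk : 2 ≤ k) : ∀ t, k ≤ t →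
    ∑ j ∈ range (t + 1), (t.choose j : ℤ) * Faux k j = 0 := by
  refine Nat.le_induction ?_ ?_
  · rw [Finset.sum_range_succ, Finset.sum_eq_single 0]
    · have h1 : Faux k 0 = 1 := by simp [Faux]
      have h2 : Faux k k = -1 := by
        unfold Faux
        rw [if_neg (by omega), if_pos le_rfl, Nat.sub_self, Nat.choose_self]
        simp
      rw [h1, h2]
      simp
    · intro j hj hj0
      rw [mem_range] at hj
      have : Faux k j = 0 := by
        unfold Faux
        rw [if_neg hj0, if_neg (by omega)]
      rw [this, mul_zero]
    · intro h
      simp only [mem_range] at h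
      omega
  · intro t ht IH
    rw [Finset.sum_range_succ']
    have hsplit : ∀ i ∈ range (t + 1), ((t+1).choose (i+1) : ℤ) * Faux k (i+1) =
        (t.choose i : ℤ) * Faux k (i+1) + (t.choose (i+1) : ℤ) * Faux k (i+1) := by
      intro i _
      rw [Nat.choose_succ_succ]
      push_cast
      ring
    rw [sum_congr rfl hsplit, Finset.sum_add_distrib]
    have hB : (∑ i ∈ range (t + 1), (t.choose (i+1) : ℤ) * Faux k (i+1)) +
        ((t+1).choose 0 : ℤ) * Faux k 0 = 0 := by
      have := Finset.sum_range_succ' (fun j => (t.choose j : ℤ) * Faux k j) (t + 1)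
      rw [Finset.sum_range_succ] at this
      rw [IH] at this
      simp only [Nat.choose_succ_self, Nat.cast_zero, zero_mul, add_zero, zero_add] at this
      simpa using this.symm
    have hA : (∑ i ∈ range (t + 1), (t.choose i : ℤ) * Faux k (i+1)) = 0 := by
      have key : ∀ i ∈ range (t + 1), (t.choose i : ℤ) * Faux k (i+1) =
          (-1) ^ k * ((-1) ^ i * (t.choose i : ℤ) * (i.choose (k-1) : ℤ)) := by
        intro i _
        by_cases hki : k ≤ i + 1
        · have h1 : Faux k (i+1) = (-1) ^ (i + 1 - k + 1) * ((i).choose (k - 1) : ℤ) := by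
            unfold Faux
            rw [if_neg (by omega), if_pos hki]
            simp
          obtain ⟨m, hm⟩ : ∃ m, i + 1 = k + m := ⟨i + 1 - k, by omega⟩
          have he1 : i + 1 - k + 1 = m + 1 := by omega
          have he2 : k + i = 2 * (k - 1) + (m + 1) := by omega
          have hsgn : ((-1 : ℤ)) ^ (i + 1 - k + 1) = (-1) ^ k * (-1) ^ i := by
            have h3 : ((-1:ℤ)) ^ (2 * (k-1) + (m+1)) = (-1) ^ (m+1) := by
              rw [pow_add, pow_mul]
              simp
            rw [he1, ← h3, ← he2, pow_add]
          rw [h1, hsgn]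
          ring
        · have h1 : Faux k (i+1) = 0 := by
            unfold Faux
            rw [if_neg (by omega), if_neg hki]
          have h2 : (i).choose (k-1) = 0 := Nat.choose_eq_zero_of_lt (by omega)
          rw [h1, h2]
          push_cast
          ring
      rw [sum_congr rfl key, ← mul_sum]
      have := L0aux t (k - 1)
      simp only [mul_assoc] at this ⊢
      rw [this, if_neg (by omega : ¬ t = k - 1)]
      ring
    rw [hA, zero_add]
    exact hB

lemma Fsum (k : ℕ) (hk : 2 ≤ k) (t : ℕ) :
    ∑ j ∈ range (t + 1), (t.choose j : ℤ) * Faux k j = if t < k then 1 else 0 := by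
  by_cases h : t < k
  · rw [if_pos h, Fsum_lt k t h]
  · rw [if_neg h, Fsum_ge k hk t (by omega)]

lemma PP (r k : ℕ) (hk : 2 ≤ k) (ψ : (Fin r → ℕ) → ℤ)
    (hpp : ∀ p : ℕ, p.Prime → ∀ ν : Fin r → ℕ,
      ψ (fun i => p ^ ν i) =
        if ∀ i, ν i ≤ 1 then
          (if (∑ i, ν i) = 0 then 1
           else if k ≤ ∑ i, ν i then
             (-1) ^ (∑ i, ν i - k + 1) * (((∑ i, ν i) - 1).choose (k - 1) : ℤ)
           else 0)
        else 0)
    (p : ℕ) (hp : p.Prime) (e : Fin r → ℕ) :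
    (if ∀ s : Finset (Fin r), s.card = k → s.gcd (fun i => p ^ e i) = 1 then 1 else 0 : ℤ) =
      ∑ d ∈ Fintype.piFinset (fun i => (p ^ e i).divisors), ψ d := by
  classical
  set T : Finset (Fin r) := Finset.univ.filter (fun i => 0 < e i) with hT
  -- Step 1: LHS
  have hLHS : (∀ s : Finset (Fin r), s.card = k → s.gcd (fun i => p ^ e i) = 1) ↔ T.card < k := by
    constructor
    · intro h
      by_contra hlt
      obtain ⟨s, hsT, hscard⟩ := Finset.exists_subset_card_eq (le_of_not_gt hlt)
      have hgcd := h s hscard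
      have hpdvd : p ∣ s.gcd (fun i => p ^ e i) := by
        apply Finset.dvd_gcd
        intro i hi
        have : 0 < e i := by
          have := hsT hi
          rw [hT, Finset.mem_filter] at this
          exact this.2
        exact dvd_pow_self p (by omega)
      rw [hgcd] at hpdvd
      exact hp.one_lt.ne' (Nat.dvd_one.mp hpdvd)
    · intro ht s hs
      have : ¬ s ⊆ T := by
        intro hsub
        have := Finset.card_le_card hsub
        omega
      obtain ⟨i, his, hiT⟩ := Finset.not_subset.mp this
      have hei : e i = 0 := by
        by_contra h0
        exact hiT (by rw [hT, Finset.mem_filter]; exact ⟨Finset.mem_univ i, by omega⟩)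
      have h2 : (s.gcd fun i => p ^ e i) ∣ p ^ e i := Finset.gcd_dvd his
      rw [hei, pow_zero] at h2
      exact Nat.dvd_one.mp h2
  -- Step 2: reindex to exponent tuples
  have hre : ∑ d ∈ Fintype.piFinset (fun i => (p ^ e i).divisors), ψ d =
      ∑ μ ∈ Fintype.piFinset (fun i => range (e i + 1)), ψ (fun i => p ^ μ i) := by
    apply Finset.sum_nbij' (i := fun d => fun i => (d i).factorization p)
      (j := fun μ => fun i => p ^ μ i)
    · intro d hd
      rw [Fintype.mem_piFinset] at hd ⊢
      intro i
      obtain ⟨m, hm, hdm⟩ := (Nat.mem_divisors_prime_pow hp (e i)).mp (hd i)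
      rw [hdm, hp.factorization_pow, Finsupp.single_eq_same, mem_range]
      omega
    · intro μ hμ
      rw [Fintype.mem_piFinset] at hμ ⊢
      intro i
      exact (Nat.mem_divisors_prime_pow hp (e i)).mpr
        ⟨μ i, by have := hμ i; rw [mem_range] at this; omega, rfl⟩
    · intro d hd
      rw [Fintype.mem_piFinset] at hd
      funext i
      show p ^ ((d i).factorization p) = d i
      obtain ⟨m, hm, hdm⟩ := (Nat.mem_divisors_prime_pow hp (e i)).mp (hd i)
      rw [hdm, hp.factorization_pow, Finsupp.single_eq_same]
    · intro μ hμ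
      funext i
      show (p ^ μ i).factorization p = μ i
      rw [hp.factorization_pow, Finsupp.single_eq_same]
    · intro d hd
      rw [Fintype.mem_piFinset] at hd
      congr 1
      funext i
      show d i = p ^ ((d i).factorization p)
      obtain ⟨m, hm, hdm⟩ := (Nat.mem_divisors_prime_pow hp (e i)).mp (hd i)
      rw [hdm, hp.factorization_pow, Finsupp.single_eq_same]
  -- Step 3: evaluate ψ and shrink to 0/1 exponents
  have hval : ∀ μ : Fin r → ℕ, ψ (fun i => p ^ μ i) =
      if ∀ i, μ i ≤ 1 then Faux k (∑ i, μ i) else 0 := by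
    intro μ
    rw [hpp p hp μ]
    unfold Faux
    rfl
  have hshrink : ∑ μ ∈ Fintype.piFinset (fun i => range (e i + 1)), ψ (fun i => p ^ μ i) =
      ∑ μ ∈ Fintype.piFinset (fun i => range (min (e i) 1 + 1)), ψ (fun i => p ^ μ i) := by
    clear hre
    symm
    apply Finset.sum_subset
    · intro μ hμ
      rw [Fintype.mem_piFinset] at hμ ⊢
      intro i
      have := hμ i
      rw [mem_range] at this ⊢
      omega
    · intro μ hμ hμ'
      rw [hval]
      rw [if_neg]
      intro hall
      apply hμ'
      rw [Fintype.mem_piFinset] at hμ ⊢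
      intro i
      have h1 := hμ i
      have h2 := hall i
      rw [mem_range] at h1 ⊢
      omega
  -- Step 4: bijection with subsets of T
  have hsub : ∑ μ ∈ Fintype.piFinset (fun i => range (min (e i) 1 + 1)), ψ (fun i => p ^ μ i) =
      ∑ S ∈ T.powerset, Faux k S.card := by
    clear hre hshrink
    apply Finset.sum_nbij' (i := fun μ => Finset.univ.filter (fun i => μ i = 1))
      (j := fun S => fun i => if i ∈ S then 1 else 0)
    · intro μ hμ
      rw [Fintype.mem_piFinset] at hμ
      rw [Finset.mem_powerset]
      intro i hi
      rw [Finset.mem_filter] at hi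
      have := hμ i
      rw [mem_range] at this
      rw [hT, Finset.mem_filter]
      exact ⟨Finset.mem_univ i, by omega⟩
    · intro S hS
      rw [Finset.mem_powerset] at hS
      rw [Fintype.mem_piFinset]
      intro i
      rw [mem_range]
      by_cases hi : i ∈ S
      · have := hS hi
        rw [hT, Finset.mem_filter] at this
        simp [hi]
        omega
      · simp [hi]
    · intro μ hμ
      rw [Fintype.mem_piFinset] at hμ
      funext i
      have := hμ i
      rw [mem_range] at this
      by_cases h1 : μ i = 1 <;> simp [h1] <;> omega
    · intro S hS
      ext i
      simp
    · intro μ hμ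
      rw [Fintype.mem_piFinset] at hμ
      rw [hval, if_pos]
      · congr 1
        rw [Finset.card_filter]
        rw [Finset.sum_congr rfl]
        intro i _
        have := hμ i
        rw [mem_range] at this
        by_cases h1 : μ i = 1 <;> simp [h1] <;> omega
      · intro i
        have := hμ i
        rw [mem_range] at this
        omega
  -- Step 5: sum over powerset
  have hpow : ∑ S ∈ T.powerset, Faux k S.card =
      if T.card < k then 1 else 0 := by
    rw [Finset.sum_powerset_apply_card, ← Fsum k hk T.card]
    apply Finset.sum_congr rfl
    intro j _
    rw [nsmul_eq_mul]
  rw [hre, hshrink, hsub, hpow]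
  exact if_congr hLHS rfl rfl

lemma sumMul (r : ℕ) (ψ : (Fin r → ℕ) → ℤ)
    (hmul : ∀ m n : Fin r → ℕ, Nat.Coprime (∏ i, m i) (∏ i, n i) →
      ψ (fun i => m i * n i) = ψ m * ψ n)
    (a b : Fin r → ℕ) (ha : ∀ i, 0 < a i) (hb : ∀ i, 0 < b i)
    (hcop : Nat.Coprime (∏ i, a i) (∏ i, b i)) :
    ∑ d ∈ Fintype.piFinset (fun i => (a i * b i).divisors), ψ d =
      (∑ u ∈ Fintype.piFinset (fun i => (a i).divisors), ψ u) *
        ∑ v ∈ Fintype.piFinset (fun i => (b i).divisors), ψ v := by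
  classical
  have hcopi : ∀ i, Nat.Coprime (a i) (b i) := fun i =>
    Nat.Coprime.coprime_dvd_right (Finset.dvd_prod_of_mem b (Finset.mem_univ i))
      (Nat.Coprime.coprime_dvd_left (Finset.dvd_prod_of_mem a (Finset.mem_univ i)) hcop)
  rw [Finset.sum_mul_sum, ← Finset.sum_product (f := fun x => ψ x.1 * ψ x.2)]
  apply Finset.sum_nbij' (i := fun d => ((fun i => (d i).gcd (a i)), (fun i => (d i).gcd (b i))))
    (j := fun x => fun i => x.1 i * x.2 i)
  · intro d hd
    rw [Fintype.mem_piFinset] at hd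
    rw [Finset.mem_product, Fintype.mem_piFinset, Fintype.mem_piFinset]
    constructor
    · intro i
      exact Nat.mem_divisors.mpr ⟨Nat.gcd_dvd_right _ _, (ha i).ne'⟩
    · intro i
      exact Nat.mem_divisors.mpr ⟨Nat.gcd_dvd_right _ _, (hb i).ne'⟩
  · intro x hx
    rw [Finset.mem_product, Fintype.mem_piFinset, Fintype.mem_piFinset] at hx
    rw [Fintype.mem_piFinset]
    intro i
    exact Nat.mem_divisors.mpr
      ⟨mul_dvd_mul (Nat.mem_divisors.mp (hx.1 i)).1 (Nat.mem_divisors.mp (hx.2 i)).1,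
       Nat.mul_ne_zero (ha i).ne' (hb i).ne'⟩
  · intro d hd
    rw [Fintype.mem_piFinset] at hd
    funext i
    show (d i).gcd (a i) * (d i).gcd (b i) = d i
    exact (Nat.gcd_mul_gcd_eq_iff_dvd_mul_of_coprime (hcopi i)).mpr
      (Nat.mem_divisors.mp (hd i)).1
  · intro x hx
    rw [Finset.mem_product, Fintype.mem_piFinset, Fintype.mem_piFinset] at hx
    have h1 : ∀ i, x.1 i ∣ a i := fun i => (Nat.mem_divisors.mp (hx.1 i)).1
    have h2 : ∀ i, x.2 i ∣ b i := fun i => (Nat.mem_divisors.mp (hx.2 i)).1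
    have hcop1 : ∀ i j, Nat.Coprime (x.2 i) (a j) := fun i j =>
      Nat.Coprime.coprime_dvd_right (Finset.dvd_prod_of_mem a (Finset.mem_univ j))
        (Nat.Coprime.coprime_dvd_left ((h2 i).trans (Finset.dvd_prod_of_mem b (Finset.mem_univ i)))
          hcop.symm)
    have hcop2 : ∀ i j, Nat.Coprime (x.1 i) (b j) := fun i j =>
      Nat.Coprime.coprime_dvd_right (Finset.dvd_prod_of_mem b (Finset.mem_univ j))
        (Nat.Coprime.coprime_dvd_left ((h1 i).trans (Finset.dvd_prod_of_mem a (Finset.mem_univ i)))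
          hcop)
    have e1 : (fun i => (x.1 i * x.2 i).gcd (a i)) = x.1 := by
      funext i
      rw [Nat.Coprime.gcd_mul_right_cancel (x.1 i) (hcop1 i i), Nat.gcd_eq_left (h1 i)]
    have e2 : (fun i => (x.1 i * x.2 i).gcd (b i)) = x.2 := by
      funext i
      rw [Nat.Coprime.gcd_mul_left_cancel (x.2 i) (hcop2 i i), Nat.gcd_eq_left (h2 i)]
    show ((fun i => (x.1 i * x.2 i).gcd (a i)), (fun i => (x.1 i * x.2 i).gcd (b i))) = x
    rw [e1, e2]
  · intro d hd
    rw [Fintype.mem_piFinset] at hd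
    have hd' : (fun i => (d i).gcd (a i) * (d i).gcd (b i)) = d := by
      funext i
      exact (Nat.gcd_mul_gcd_eq_iff_dvd_mul_of_coprime (hcopi i)).mpr
        (Nat.mem_divisors.mp (hd i)).1
    have := hmul (fun i => (d i).gcd (a i)) (fun i => (d i).gcd (b i))
      (Nat.Coprime.coprime_dvd_right
        (Finset.prod_dvd_prod_of_dvd _ _ (fun i _ => Nat.gcd_dvd_right (d i) (b i)))
        (Nat.Coprime.coprime_dvd_left
          (Finset.prod_dvd_prod_of_dvd _ _ (fun i _ => Nat.gcd_dvd_right (d i) (a i))) hcop))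
    rw [hd'] at this
    exact this

lemma rhoMulCond (r k : ℕ) (hk : 2 ≤ k) (a b : Fin r → ℕ)
    (hcop : Nat.Coprime (∏ i, a i) (∏ i, b i)) :
    (∀ s : Finset (Fin r), s.card = k → s.gcd (fun i => a i * b i) = 1) ↔
      ((∀ s : Finset (Fin r), s.card = k → s.gcd a = 1) ∧
        (∀ s : Finset (Fin r), s.card = k → s.gcd b = 1)) := by
  constructor
  · intro h
    constructor <;> intro s hs
    · have hd : s.gcd a ∣ s.gcd (fun i => a i * b i) :=
        Finset.dvd_gcd (fun i hi => ((Finset.gcd_dvd hi).trans (dvd_mul_right _ _)))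
      rw [h s hs] at hd
      exact Nat.dvd_one.mp hd
    · have hd : s.gcd b ∣ s.gcd (fun i => a i * b i) :=
        Finset.dvd_gcd (fun i hi => ((Finset.gcd_dvd hi).trans (dvd_mul_left _ _)))
      rw [h s hs] at hd
      exact Nat.dvd_one.mp hd
  · rintro ⟨ha, hb⟩ s hs
    by_contra hne
    obtain ⟨q, hq, hqd⟩ := Nat.exists_prime_and_dvd hne
    have hsne : s.Nonempty := Finset.card_pos.mp (by omega)
    obtain ⟨i0, hi0⟩ := hsne
    have hq0 : q ∣ a i0 * b i0 := hqd.trans (Finset.gcd_dvd hi0)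
    have hqab : ∀ i ∈ s, q ∣ a i * b i := fun i hi => hqd.trans (Finset.gcd_dvd hi)
    rcases (Nat.Prime.dvd_mul hq).mp hq0 with hqa | hqb
    · have hqA : q ∣ ∏ i, a i := hqa.trans (Finset.dvd_prod_of_mem a (Finset.mem_univ i0))
      have hqnB : ¬ q ∣ ∏ i, b i := by
        intro hqB
        have := Nat.dvd_gcd hqA hqB
        rw [Nat.Coprime] at hcop
        rw [hcop] at this
        exact hq.one_lt.ne' (Nat.dvd_one.mp this)
      have : q ∣ s.gcd a := by
        apply Finset.dvd_gcd
        intro i hi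
        rcases (Nat.Prime.dvd_mul hq).mp (hqab i hi) with h' | h'
        · exact h'
        · exact absurd (h'.trans (Finset.dvd_prod_of_mem b (Finset.mem_univ i))) hqnB
      rw [ha s hs] at this
      exact hq.one_lt.ne' (Nat.dvd_one.mp this)
    · have hqB : q ∣ ∏ i, b i := hqb.trans (Finset.dvd_prod_of_mem b (Finset.mem_univ i0))
      have hqnA : ¬ q ∣ ∏ i, a i := by
        intro hqA
        have := Nat.dvd_gcd hqA hqB
        rw [Nat.Coprime] at hcop
        rw [hcop] at this
        exact hq.one_lt.ne' (Nat.dvd_one.mp this)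
      have : q ∣ s.gcd b := by
        apply Finset.dvd_gcd
        intro i hi
        rcases (Nat.Prime.dvd_mul hq).mp (hqab i hi) with h' | h'
        · exact absurd (h'.trans (Finset.dvd_prod_of_mem a (Finset.mem_univ i))) hqnA
        · exact h'
      rw [hb s hs] at this
      exact hq.one_lt.ne' (Nat.dvd_one.mp this)

/-- If `ψ` is the multiplicative function of r variables with
`ψ(p^{ν₁},...,ν_r}) = 1` when all `νᵢ = 0`, `= (-1)^{j-k+1} C(j-1,k-1)` when all
`νᵢ ∈ {0,1}` and `j := ν₁+...+ν_r ≥ k`, and `= 0` otherwise, then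
`ϱ_{r,k}(n₁,...,n_r) = ∑_{d₁∣n₁,...,d_r∣n_r} ψ(d₁,...,d_r)`. -/
theorem rho_eq_sum_psi (r k : ℕ) (hk : 2 ≤ k) (hkr : k ≤ r)
    (ψ : (Fin r → ℕ) → ℤ)
    (hmul : ∀ m n : Fin r → ℕ, Nat.Coprime (∏ i, m i) (∏ i, n i) →
      ψ (fun i => m i * n i) = ψ m * ψ n)
    (hpp : ∀ p : ℕ, p.Prime → ∀ ν : Fin r → ℕ,
      ψ (fun i => p ^ ν i) =
        if ∀ i, ν i ≤ 1 then
          (if (∑ i, ν i) = 0 then 1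
           else if k ≤ ∑ i, ν i then
             (-1) ^ (∑ i, ν i - k + 1) * (((∑ i, ν i) - 1).choose (k - 1) : ℤ)
           else 0)
        else 0)
    (n : Fin r → ℕ) (hn : ∀ i, 0 < n i) :
    (if ∀ s : Finset (Fin r), s.card = k → s.gcd n = 1 then 1 else 0 : ℤ) =
      ∑ d ∈ Fintype.piFinset (fun i => (n i).divisors), ψ d := by
  classical
  suffices H : ∀ N : ℕ, ∀ n : Fin r → ℕ, (∀ i, 0 < n i) → ∏ i, n i = N →
      (if ∀ s : Finset (Fin r), s.card = k → s.gcd n = 1 then 1 else 0 : ℤ) =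
        ∑ d ∈ Fintype.piFinset (fun i => (n i).divisors), ψ d from H _ n hn rfl
  intro N
  induction N using Nat.strong_induction_on with
  | _ N IH =>
    intro n hn hprod
    by_cases h1 : ∏ i, n i = 1
    · -- all n i = 1
      have hone : ∀ i, n i = 1 := by
        intro i
        have : n i ∣ ∏ j, n j := Finset.dvd_prod_of_mem n (Finset.mem_univ i)
        rw [h1] at this
        exact Nat.dvd_one.mp this
      have hn2 : n = fun i => 2 ^ ((fun _ : Fin r => 0) i) := by
        funext i
        simp [hone i]
      rw [hn2]
      exact PP r k hk ψ hpp 2 Nat.prime_two (fun _ => 0)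
    · obtain ⟨p, hp, hpdvd⟩ := Nat.exists_prime_and_dvd h1
      set a : Fin r → ℕ := fun i => p ^ (n i).factorization p with haDef
      set b : Fin r → ℕ := fun i => n i / p ^ (n i).factorization p with hbDef
      have hab : ∀ i, a i * b i = n i := fun i =>
        Nat.ordProj_mul_ordCompl_eq_self (n i) p
      have hapos : ∀ i, 0 < a i := fun i => pow_pos hp.pos _
      have hbpos : ∀ i, 0 < b i := fun i => Nat.ordCompl_pos p (hn i).ne'
      have hpb : ∀ i, ¬ p ∣ b i := fun i => Nat.not_dvd_ordCompl hp (hn i).ne'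
      have hcop : Nat.Coprime (∏ i, a i) (∏ i, b i) := by
        have hnd : ¬ p ∣ ∏ i, b i := by
          rw [Prime.dvd_finset_prod_iff hp.prime]
          rintro ⟨i, -, hd⟩
          exact hpb i hd
        have hc : Nat.Coprime p (∏ i, b i) := (Nat.Prime.coprime_iff_not_dvd hp).mpr hnd
        have : ∏ i, a i = p ^ ∑ i, (n i).factorization p :=
          Finset.prod_pow_eq_pow_sum _ _ _
        rw [this]
        exact Nat.Coprime.pow_left _ hc
      have hprodab : (∏ i, a i) * (∏ i, b i) = N := by
        rw [← Finset.prod_mul_distrib, ← hprod]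
        exact Finset.prod_congr rfl (fun i _ => hab i)
      have hblt : ∏ i, b i < N := by
        have hpa : p ∣ ∏ i, a i := by
          rcases (Nat.Prime.dvd_mul hp).mp (by rw [hprodab]; exact hprod ▸ hpdvd) with h | h
          · exact h
          · exact absurd h (by
              rw [Prime.dvd_finset_prod_iff hp.prime]
              rintro ⟨i, -, hd⟩
              exact hpb i hd)
        have h2a : 2 ≤ ∏ i, a i := le_trans hp.two_le (Nat.le_of_dvd
          (Finset.prod_pos (fun i _ => hapos i)) hpa)
        have hbp : 0 < ∏ i, b i := Finset.prod_pos (fun i _ => hbpos i)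
        calc ∏ i, b i < 2 * ∏ i, b i := by omega
        _ ≤ (∏ i, a i) * ∏ i, b i := Nat.mul_le_mul_right _ h2a
        _ = N := hprodab
      have hn' : n = fun i => a i * b i := funext fun i => (hab i).symm
      rw [hn', sumMul r ψ hmul a b hapos hbpos hcop,
        if_congr (rhoMulCond r k hk a b hcop) rfl rfl]
      have hA : (if ∀ s : Finset (Fin r), s.card = k → s.gcd a = 1 then 1 else 0 : ℤ) =
          ∑ u ∈ Fintype.piFinset (fun i => (a i).divisors), ψ u :=
        PP r k hk ψ hpp p hp (fun i => (n i).factorization p)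
      have hB : (if ∀ s : Finset (Fin r), s.card = k → s.gcd b = 1 then 1 else 0 : ℤ) =
          ∑ v ∈ Fintype.piFinset (fun i => (b i).divisors), ψ v :=
        IH (∏ i, b i) hblt b hbpos rfl
      rw [← hA, ← hB, ite_and]
      by_cases hPA : ∀ s : Finset (Fin r), s.card = k → s.gcd a = 1
      · rw [if_pos hPA, if_pos hPA, one_mul]
      · rw [if_neg hPA, if_neg hPA, zero_mul]
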